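/- Let $f : [a,b] \to \mathbb{R}$ be continuous and differentiable on $(a,p) \cup (p,b)$ for some $p \in (a,b)$, with $|f'| \le M_1$ on $(a,p)$ and $|f'| \le M_2$ on $(p,b)$. Then for the midpoint $p = \frac{a+b}{2}$, $\left| f\left(\tfrac{a+b}{2}\right) - \frac{1}{b-a}\int_a^b f(t)\,dt \right| \le \frac{b-a}{4}\max\{M_1, M_2\}$. -/

import Mathlib

theorem ostrowski_midpoint_refinement (a b M₁ M₂ : ℝ) (f f' : ℝ → ℝ)
    (hab : a < b) (hM₁ : 0 ≤ M₁) (hM₂ : 0 ≤ M₂)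
    (hf : ContinuousOn f (Set.Icc a b))
    (hderiv₁ : ∀ t ∈ Set.Ioo a ((a + b) / 2), HasDerivAt f (f' t) t)
    (hbound₁ : ∀ t ∈ Set.Ioo a ((a + b) / 2), |f' t| ≤ M₁)
    (hderiv₂ : ∀ t ∈ Set.Ioo ((a + b) / 2) b, HasDerivAt f (f' t) t)
    (hbound₂ : ∀ t ∈ Set.Ioo ((a + b) / 2) b, |f' t| ≤ M₂) :
    |f ((a + b) / 2) - (1 / (b - a)) * ∫ t in a..b, f t| ≤
      (b - a) / 4 * max M₁ M₂ := by
  set p : ℝ := (a + b) / 2 with hp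
  set M : ℝ := max M₁ M₂ with hM
  have hpa : a < p := by rw [hp]; linarith
  have hpb : p < b := by rw [hp]; linarith
  have hM₁M : M₁ ≤ M := le_max_left _ _
  have hM₂M : M₂ ≤ M := le_max_right _ _
  have hMnn : 0 ≤ M := le_trans hM₁ hM₁M
  -- key pointwise bound
  have key : ∀ t ∈ Set.Icc a b, |f p - f t| ≤ M * |t - p| := by
    intro t ht
    rcases lt_trichotomy t p with hlt | heq | hgt
    · have hcont : ContinuousOn f (Set.Icc t p) :=
        hf.mono (Set.Icc_subset_Icc ht.1 hpb.le)
      have hder : ∀ x ∈ Set.Ioo t p, HasDerivAt f (f' x) x := fun x hx =>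
        hderiv₁ x ⟨lt_of_le_of_lt ht.1 hx.1, hx.2⟩
      obtain ⟨c, hc, hc'⟩ := exists_hasDerivAt_eq_slope f f' hlt hcont hder
      have hbc : |f' c| ≤ M₁ := hbound₁ c ⟨lt_of_le_of_lt ht.1 hc.1, hc.2⟩
      have hne : p - t ≠ 0 := ne_of_gt (by linarith)
      have : f p - f t = f' c * (p - t) := by
        rw [hc', div_mul_cancel₀ _ hne]
      rw [this, abs_mul, abs_of_pos (by linarith : (0:ℝ) < p - t),
        abs_of_nonpos (by linarith : t - p ≤ 0), neg_sub]
      exact mul_le_mul (le_trans hbc hM₁M) le_rfl (by linarith) hMnn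
    · simp only [heq, sub_self, abs_zero]
      positivity
    · have hcont : ContinuousOn f (Set.Icc p t) :=
        hf.mono (Set.Icc_subset_Icc hpa.le ht.2)
      have hder : ∀ x ∈ Set.Ioo p t, HasDerivAt f (f' x) x := fun x hx =>
        hderiv₂ x ⟨hx.1, lt_of_lt_of_le hx.2 ht.2⟩
      obtain ⟨c, hc, hc'⟩ := exists_hasDerivAt_eq_slope f f' hgt hcont hder
      have hbc : |f' c| ≤ M₂ := hbound₂ c ⟨hc.1, lt_of_lt_of_le hc.2 ht.2⟩
      have hne : t - p ≠ 0 := ne_of_gt (by linarith)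
      have : f p - f t = f' c * (p - t) := by
        rw [hc']; field_simp
        ring
      rw [this, abs_mul, abs_of_neg (by linarith : p - t < 0),
        abs_of_pos (by linarith : (0:ℝ) < t - p), neg_sub]
      exact mul_le_mul (le_trans hbc hM₂M) le_rfl (by linarith) hMnn
  have hint : IntervalIntegrable f MeasureTheory.volume a b :=
    hf.intervalIntegrable_of_Icc hab.le
  have hgint : IntervalIntegrable (fun t => f p - f t) MeasureTheory.volume a b :=
    (intervalIntegrable_const).sub hint
  have habsint : IntervalIntegrable (fun t => |f p - f t|) MeasureTheory.volume a b :=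
    hgint.abs
  have hMint : IntervalIntegrable (fun t => M * |t - p|) MeasureTheory.volume a b :=
    ((continuous_const.mul ((continuous_id.sub continuous_const).abs)).intervalIntegrable a b)
  have h1 : (b - a) * f p - ∫ t in a..b, f t = ∫ t in a..b, (f p - f t) := by
    rw [intervalIntegral.integral_sub intervalIntegrable_const hint,
      intervalIntegral.integral_const, smul_eq_mul]
  have h2 : |∫ t in a..b, (f p - f t)| ≤ ∫ t in a..b, M * |t - p| := by
    calc |∫ t in a..b, (f p - f t)| ≤ ∫ t in a..b, |f p - f t| :=
          intervalIntegral.abs_integral_le_integral_abs hab.le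
      _ ≤ ∫ t in a..b, M * |t - p| := by
          apply intervalIntegral.integral_mono_on hab.le habsint hMint
          exact fun t ht => key t ht
  have h3 : (∫ t in a..b, M * |t - p|) = M * ((b - a) ^ 2 / 4) := by
    have hsplit : (∫ t in a..p, M * |t - p|) + (∫ t in p..b, M * |t - p|)
        = ∫ t in a..b, M * |t - p| :=
      intervalIntegral.integral_add_adjacent_intervals
        ((continuous_const.mul ((continuous_id.sub continuous_const).abs)).intervalIntegrable a p)
        ((continuous_const.mul ((continuous_id.sub continuous_const).abs)).intervalIntegrable p b)
    have e1 : (∫ t in a..p, M * |t - p|) = ∫ t in a..p, M * (p - t) := by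
      apply intervalIntegral.integral_congr
      intro t ht
      rw [Set.uIcc_of_le hpa.le] at ht
      show M * |t - p| = M * (p - t)
      rw [abs_of_nonpos (by linarith [ht.2] : t - p ≤ 0)]
      ring
    have e2 : (∫ t in p..b, M * |t - p|) = ∫ t in p..b, M * (t - p) := by
      apply intervalIntegral.integral_congr
      intro t ht
      rw [Set.uIcc_of_le hpb.le] at ht
      show M * |t - p| = M * (t - p)
      rw [abs_of_nonneg (by linarith [ht.1] : (0:ℝ) ≤ t - p)]
    have v1 : (∫ t in a..p, M * (p - t)) = M * ((p - a) ^ 2 / 2) := by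
      have h : (∫ t in a..p, (p - t)) = (p - a) ^ 2 / 2 := by
        rw [intervalIntegral.integral_sub intervalIntegrable_const (continuous_id'.intervalIntegrable _ _),
          intervalIntegral.integral_const, integral_id, smul_eq_mul]
        ring
      rw [intervalIntegral.integral_const_mul, h]
    have v2 : (∫ t in p..b, M * (t - p)) = M * ((b - p) ^ 2 / 2) := by
      have h : (∫ t in p..b, (t - p)) = (b - p) ^ 2 / 2 := by
        rw [intervalIntegral.integral_sub (continuous_id'.intervalIntegrable _ _) intervalIntegrable_const,
          intervalIntegral.integral_const, integral_id, smul_eq_mul]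
        ring
      rw [intervalIntegral.integral_const_mul, h]
    rw [← hsplit, e1, e2, v1, v2, hp]
    ring
  have hmain : |(b - a) * f p - ∫ t in a..b, f t| ≤ M * ((b - a) ^ 2 / 4) := by
    rw [h1]; rw [← h3]; exact h2
  have hba : (0:ℝ) < b - a := by linarith
  have hfactor : f p - (1 / (b - a)) * ∫ t in a..b, f t
      = (1 / (b - a)) * ((b - a) * f p - ∫ t in a..b, f t) := by
    field_simp
  rw [hfactor, abs_mul, abs_of_pos (by positivity : (0:ℝ) < 1 / (b - a))]
  calc (1 / (b - a)) * |(b - a) * f p - ∫ t in a..b, f t|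
      ≤ (1 / (b - a)) * (M * ((b - a) ^ 2 / 4)) := by
        apply mul_le_mul_of_nonneg_left hmain (by positivity)
    _ = (b - a) / 4 * M := by field_simp
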